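/- Let G be an infinite non-abelian C'-cofinite group. Then the second center Z₂(G) coincides with the center Z(G). In particular, G has no infinite nilpotent subgroup. -/

import Mathlib

/-- `G` is `C'`-cofinite: the centralizer of every element is either finite or all of `G`. -/
def CprimeCofinite (G : Type*) [Group G] : Prop :=
  ∀ g : G, {x : G | x * g = g * x}.Finite ∨ {x : G | x * g = g * x} = Set.univ

/-- Counting lemma: if an infinite set `S` maps into a finite set `T` via `f`, and whenever
two elements of `S` have the same image their "quotient" lies in `C`, then `C` is infinite. -/
lemma fiber_count {H : Type*} [Group H] {S T C : Set H} (hS : S.Infinite) (hT : T.Finite)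
    (f : H → H) (hf : ∀ a ∈ S, f a ∈ T)
    (hC : ∀ a ∈ S, ∀ b ∈ S, f a = f b → a⁻¹ * b ∈ C) : C.Infinite := by
  by_contra hfin
  rw [Set.not_infinite] at hfin
  apply hS
  have hsub : S ⊆ ⋃ t ∈ T, {a ∈ S | f a = t} := by
    intro a ha
    exact Set.mem_biUnion (hf a ha) ⟨ha, rfl⟩
  refine Set.Finite.subset (hT.biUnion ?_) hsub
  intro t _
  by_cases hne : ({a ∈ S | f a = t} : Set H).Nonempty
  · obtain ⟨a₀, ha₀S, ha₀⟩ := hne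
    refine Set.Finite.subset (hfin.image (fun c => a₀ * c)) ?_
    rintro b ⟨hbS, hb⟩
    exact ⟨a₀⁻¹ * b, hC a₀ ha₀S b hbS (by rw [ha₀, hb]), by group⟩
  · rw [Set.not_nonempty_iff_eq_empty] at hne
    rw [hne]; exact Set.finite_empty

/-- If some term of the upper central series is infinite, every centralizer is infinite. -/
lemma ucs_infinite_centralizer {H : Type*} [Group H] :
    ∀ i : ℕ, ((upperCentralSeries H i : Set H)).Infinite →
      ∀ h : H, {x : H | x * h = h * x}.Infinite := by
  intro i
  induction i with
  | zero =>
      intro hinf _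
      exact absurd (by simp [upperCentralSeries, upperCentralSeries_zero] : ¬ _) (not_not.mpr hinf)
  | succ n ih =>
      intro hinf h
      by_cases hn : ((upperCentralSeries H n : Set H)).Infinite
      · exact ih hn h
      · rw [Set.not_infinite] at hn
        refine fiber_count hinf hn (fun k => k * h * k⁻¹ * h⁻¹) ?_ ?_
        · intro a ha
          exact (mem_upperCentralSeries_succ_iff).mp ha h
        · intro a _ b _ hab
          have h1 : a * h * a⁻¹ = b * h * b⁻¹ := mul_right_cancel hab
          show a⁻¹ * b * h = h * (a⁻¹ * b)
          calc a⁻¹ * b * h = a⁻¹ * (b * h * b⁻¹) * b := by group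
            _ = a⁻¹ * (a * h * a⁻¹) * b := by rw [h1]
            _ = h * (a⁻¹ * b) := by group

/-- Let `G` be an infinite non-abelian `C'`-cofinite group. Then the second center of `G`
coincides with the center, and `G` has no infinite nilpotent subgroup. -/
theorem stmt_11 {G : Type*} [Group G] [Infinite G]
    (hna : ¬ ∀ a b : G, a * b = b * a) (hG : CprimeCofinite G) :
    upperCentralSeries G 2 = Subgroup.center G ∧
    (∀ H : Subgroup G, Group.IsNilpotent H → (H : Set G).Finite) := by
  -- the center of G is finite
  push_neg at hna
  obtain ⟨a, b, hab⟩ := hna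
  have hb : {x : G | x * b = b * x}.Finite := by
    rcases hG b with h | h
    · exact h
    · exfalso; exact hab (by have : a ∈ ({x : G | x * b = b * x} : Set G) := h ▸ Set.mem_univ a; exact this)
  have hZfin : (Subgroup.center G : Set G).Finite := by
    refine hb.subset ?_
    intro z hz
    exact ((Subgroup.mem_center_iff.mp hz) b).symm
  constructor
  · -- Z₂ = Z
    apply le_antisymm
    · intro x hx
      by_contra hxZ
      have hCx : {y : G | y * x = x * y}.Finite := by
        rcases hG x with h | h
        · exact h
        · refine absurd (Subgroup.mem_center_iff.mpr (fun g => ?_)) hxZ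
          have : g ∈ ({y : G | y * x = x * y} : Set G) := h ▸ Set.mem_univ g
          exact this
      have : {y : G | y * x = x * y}.Infinite := by
        refine fiber_count (Set.infinite_univ) hZfin (fun y => y * x * y⁻¹ * x⁻¹)
          (fun y _ => ?_) (fun y _ y' _ hyy' => ?_)
        · -- y x y⁻¹ x⁻¹ ∈ center, as inverse of x y x⁻¹ y⁻¹ which is in ucs G 1 = center
          have hx1 : x * y * x⁻¹ * y⁻¹ ∈ upperCentralSeries G 1 :=
            (mem_upperCentralSeries_succ_iff).mp hx y
          rw [upperCentralSeries, upperCentralSeries_one] at hx1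
          have := (Subgroup.center G).inv_mem hx1
          simpa [mul_assoc] using this
        · have h1 : y * x * y⁻¹ = y' * x * y'⁻¹ := mul_right_cancel hyy'
          show y⁻¹ * y' * x = x * (y⁻¹ * y')
          calc y⁻¹ * y' * x = y⁻¹ * (y' * x * y'⁻¹) * y' := by group
            _ = y⁻¹ * (y * x * y⁻¹) * y' := by rw [h1]
            _ = x * (y⁻¹ * y') := by group
      exact this hCx
    · rw [← upperCentralSeries_one (G := G)]
      exact upperCentralSeries_mono G (by norm_num)
  · -- no infinite nilpotent subgroup
    intro H hH
    by_contra hHinf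
    rw [← Set.not_infinite, not_not] at hHinf
    have : Infinite H := Set.infinite_coe_iff.mpr hHinf
    obtain ⟨n, hn⟩ := hH
    have htop : ((upperCentralSeries H n : Set H)).Infinite := by
      rw [upperCentralSeries, hn]
      simpa using Set.infinite_univ (α := H)
    -- every element of H is central in G
    have hcent : ∀ h : H, (h : G) ∈ Subgroup.center G := by
      intro h
      have hinfH : {x : H | x * h = h * x}.Infinite := ucs_infinite_centralizer n htop h
      have hinfG : {x : G | x * (h : G) = (h : G) * x}.Infinite := by
        have : Set.InjOn (fun x : H => (x : G)) {x : H | x * h = h * x} :=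
          fun x _ y _ hxy => Subtype.ext hxy
        refine Set.Infinite.mono ?_ (Set.Infinite.image this hinfH)
        rintro _ ⟨x, hx, rfl⟩
        exact congrArg Subtype.val hx
      rcases hG (h : G) with hfin | huniv
      · exact absurd hfin hinfG
      · refine Subgroup.mem_center_iff.mpr (fun g => ?_)
        have : g ∈ ({x : G | x * (h : G) = (h : G) * x} : Set G) := huniv ▸ Set.mem_univ g
        exact this
    exact hHinf (hZfin.subset (fun x hx => hcent ⟨x, hx⟩))
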